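/- For Polish spaces X, Y with Borel probability measures μ_X, μ_Y and Borel measurable functions f : X → ℝ, g : Y → ℝ, the p-th Wasserstein distance between the pushforward measures equals a coupling infimum: W_p(f_*μ_X, g_*μ_Y) = inf over μ ∈ C(μ_X, μ_Y) of ‖f ∘ π_X − g ∘ π_Y‖_{L^p(μ)}. -/

import Mathlib

open MeasureTheory ENNReal

/-- The set of couplings between two measures: probability-type measures on the product
with the prescribed marginals. -/
def Coupling {X Y : Type*} [MeasurableSpace X] [MeasurableSpace Y]
    (μX : Measure X) (μY : Measure Y) : Set (Measure (X × Y)) :=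
  {μ | μ.fst = μX ∧ μ.snd = μY}

/-- The `p`-distortion of a coupling `μ` between two measure networks, namely
`‖ω_X - ω_Y‖_{L^p(μ ⊗ μ)}` (for `p = ∞` this is the essential supremum). -/
noncomputable def dis {X Y : Type*} [MeasurableSpace X] [MeasurableSpace Y]
    (ωX : X × X → ℝ) (ωY : Y × Y → ℝ) (p : ℝ≥0∞) (μ : Measure (X × Y)) : ℝ≥0∞ :=
  eLpNorm (fun q : (X × Y) × (X × Y) => ωX (q.1.1, q.2.1) - ωY (q.1.2, q.2.2)) p (μ.prod μ)

/-- The network Gromov–Wasserstein distance: half the infimal `p`-distortion over couplings. -/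
noncomputable def dN {X Y : Type*} [MeasurableSpace X] [MeasurableSpace Y]
    (ωX : X × X → ℝ) (ωY : Y × Y → ℝ) (p : ℝ≥0∞) (μX : Measure X) (μY : Measure Y) : ℝ≥0∞ :=
  (1 / 2) * ⨅ μ ∈ Coupling μX μY, dis ωX ωY p μ

/-- The `p`-th Wasserstein distance between two Borel measures on `ℝ`, as an infimum of
`L^p` transport costs over couplings. -/
noncomputable def Wp (p : ℝ≥0∞) (α β : Measure ℝ) : ℝ≥0∞ :=
  ⨅ θ ∈ Coupling α β, eLpNorm (fun q : ℝ × ℝ => q.1 - q.2) p θ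

open ProbabilityTheory

section Aux

variable {X : Type*} [MeasurableSpace X] [StandardBorelSpace X] [Nonempty X]

/-- The conditional kernel of `μX.map (fun x => (f x, x))` is a.e. supported on the fiber. -/
lemma condKernel_fiber_ae (μX : Measure X) [IsProbabilityMeasure μX]
    {f : X → ℝ} (hf : Measurable f) :
    ∀ᵐ a ∂(μX.map f),
      (μX.map (fun x => (f x, x))).condKernel a {x | f x = a} = 1 := by
  set ρ : Measure (ℝ × X) := μX.map (fun x => (f x, x)) with hρdef
  have hmeas : Measurable (fun x => (f x, x)) := hf.prodMk measurable_id
  have : IsProbabilityMeasure ρ := Measure.isProbabilityMeasure_map hmeas.aemeasurable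
  have hρfst : ρ.fst = μX.map f := by
    rw [hρdef, Measure.fst, Measure.map_map measurable_fst hmeas]
    rfl
  have hG : MeasurableSet {p : ℝ × X | f p.2 = p.1} :=
    measurableSet_eq_fun (hf.comp measurable_snd) measurable_fst
  have hρG : ρ {p : ℝ × X | f p.2 = p.1}ᶜ = 0 := by
    rw [hρdef, Measure.map_apply hmeas hG.compl]
    have hempty : (fun x => (f x, x)) ⁻¹' {p : ℝ × X | f p.2 = p.1}ᶜ = (∅ : Set X) := by
      ext x; simp
    rw [hempty]
    exact measure_empty
  rw [← Measure.lintegral_condKernel_mem hG.compl] at hρG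
  have hmeas2 : Measurable fun x : ℝ =>
      ρ.condKernel x {y | (x, y) ∈ {p : ℝ × X | f p.2 = p.1}ᶜ} :=
    Kernel.measurable_kernel_prodMk_left hG.compl
  have hae := (lintegral_eq_zero_iff hmeas2).mp hρG
  rw [← hρfst]
  filter_upwards [hae] with a ha
  have h0 : ρ.condKernel a {x | f x = a}ᶜ = 0 := by
    rw [show {x : X | f x = a}ᶜ = {y : X | (a, y) ∈ {p : ℝ × X | f p.2 = p.1}ᶜ} from by
      ext x; simp]
    exact ha
  rwa [prob_compl_eq_zero_iff
    (show MeasurableSet {x : X | f x = a} from hf (measurableSet_singleton a))] at h0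

end Aux

section Lift

variable {X Y : Type*} [MeasurableSpace X] [StandardBorelSpace X]
    [MeasurableSpace Y] [StandardBorelSpace Y]

/-- Any coupling of the pushforward measures lifts to a coupling of the original measures. -/
lemma exists_coupling_lift (μX : Measure X) (μY : Measure Y)
    [IsProbabilityMeasure μX] [IsProbabilityMeasure μY]
    {f : X → ℝ} {g : Y → ℝ} (hf : Measurable f) (hg : Measurable g)
    {θ : Measure (ℝ × ℝ)} (hθ : θ ∈ Coupling (μX.map f) (μY.map g)) :
    ∃ μ ∈ Coupling μX μY, μ.map (fun q : X × Y => (f q.1, g q.2)) = θ := by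
  have hXne : Nonempty X := by
    rcases isEmpty_or_nonempty X with h | h
    · have h0 : μX Set.univ = 0 := by simp [Set.univ_eq_empty_iff.2 h]
      rw [measure_univ] at h0
      exact absurd h0 one_ne_zero
    · exact h
  have hYne : Nonempty Y := by
    rcases isEmpty_or_nonempty Y with h | h
    · have h0 : μY Set.univ = 0 := by simp [Set.univ_eq_empty_iff.2 h]
      rw [measure_univ] at h0
      exact absurd h0 one_ne_zero
    · exact h
  obtain ⟨hθ1, hθ2⟩ := hθ
  have : IsProbabilityMeasure (μX.map f) := Measure.isProbabilityMeasure_map hf.aemeasurable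
  have : IsProbabilityMeasure (μY.map g) := Measure.isProbabilityMeasure_map hg.aemeasurable
  have hθprob : IsProbabilityMeasure θ := by
    constructor
    have : θ.fst Set.univ = 1 := by rw [hθ1]; exact measure_univ
    simpa [Measure.fst_apply] using this
  set ρX : Measure (ℝ × X) := μX.map (fun x => (f x, x)) with hρXdef
  set ρY : Measure (ℝ × Y) := μY.map (fun y => (g y, y)) with hρYdef
  have hmX : Measurable (fun x => (f x, x)) := hf.prodMk measurable_id
  have hmY : Measurable (fun y => (g y, y)) := hg.prodMk measurable_id
  have : IsProbabilityMeasure ρX := Measure.isProbabilityMeasure_map hmX.aemeasurable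
  have : IsProbabilityMeasure ρY := Measure.isProbabilityMeasure_map hmY.aemeasurable
  have hρXfst : ρX.fst = μX.map f := by
    rw [hρXdef, Measure.fst, Measure.map_map measurable_fst hmX]; rfl
  have hρYfst : ρY.fst = μY.map g := by
    rw [hρYdef, Measure.fst, Measure.map_map measurable_fst hmY]; rfl
  set κ : Kernel (ℝ × ℝ) (X × Y) :=
    (ρX.condKernel.comap Prod.fst measurable_fst) ×ₖ
      (ρY.condKernel.comap Prod.snd measurable_snd) with hκdef
  have hκapp : ∀ r : ℝ × ℝ, κ r = (ρX.condKernel r.1).prod (ρY.condKernel r.2) := by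
    intro r
    rw [hκdef, Kernel.prod_apply, Kernel.comap_apply, Kernel.comap_apply]
  have hκmarkov : IsMarkovKernel κ := by
    rw [hκdef]; infer_instance
  set μ : Measure (X × Y) := θ.bind κ with hμdef
  refine ⟨μ, ⟨?_, ?_⟩, ?_⟩
  · -- first marginal
    ext s hs
    rw [Measure.fst_apply hs, hμdef, Measure.bind_apply (measurable_fst hs) κ.measurable.aemeasurable]
    have h1 : ∀ r : ℝ × ℝ, κ r (Prod.fst ⁻¹' s) = ρX.condKernel r.1 s := by
      intro r
      rw [hκapp r, ← Set.prod_univ, Measure.prod_prod, measure_univ, mul_one]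
    simp_rw [h1]
    have h2 : ∫⁻ r : ℝ × ℝ, ρX.condKernel r.1 s ∂θ
        = ∫⁻ a, ρX.condKernel a s ∂(θ.map Prod.fst) :=
      (lintegral_map (ρX.condKernel.measurable_coe hs) measurable_fst).symm
    rw [h2]
    have h3 : θ.map Prod.fst = ρX.fst := by rw [← hρXfst] at hθ1; exact hθ1
    rw [h3]
    have h4 : ∫⁻ a, ρX.condKernel a s ∂ρX.fst = ρX (Set.univ ×ˢ s) := by
      rw [← Measure.setLIntegral_condKernel_eq_measure_prod MeasurableSet.univ hs,
        setLIntegral_univ]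
    rw [h4, hρXdef, Measure.map_apply hmX (MeasurableSet.univ.prod hs)]
    congr 1
    ext x; simp
  · -- second marginal
    ext s hs
    rw [Measure.snd_apply hs, hμdef, Measure.bind_apply (measurable_snd hs) κ.measurable.aemeasurable]
    have h1 : ∀ r : ℝ × ℝ, κ r (Prod.snd ⁻¹' s) = ρY.condKernel r.2 s := by
      intro r
      rw [hκapp r, ← Set.univ_prod, Measure.prod_prod, measure_univ, one_mul]
    simp_rw [h1]
    have h2 : ∫⁻ r : ℝ × ℝ, ρY.condKernel r.2 s ∂θ
        = ∫⁻ a, ρY.condKernel a s ∂(θ.map Prod.snd) :=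
      (lintegral_map (ρY.condKernel.measurable_coe hs) measurable_snd).symm
    rw [h2]
    have h3 : θ.map Prod.snd = ρY.fst := by rw [← hρYfst] at hθ2; exact hθ2
    rw [h3]
    have h4 : ∫⁻ a, ρY.condKernel a s ∂ρY.fst = ρY (Set.univ ×ˢ s) := by
      rw [← Measure.setLIntegral_condKernel_eq_measure_prod MeasurableSet.univ hs,
        setLIntegral_univ]
    rw [h4, hρYdef, Measure.map_apply hmY (MeasurableSet.univ.prod hs)]
    congr 1
    ext y; simp
  · -- pushforward identity
    have hT : Measurable (fun q : X × Y => (f q.1, g q.2)) :=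
      (hf.comp measurable_fst).prodMk (hg.comp measurable_snd)
    ext S hS
    rw [Measure.map_apply hT hS, hμdef,
      Measure.bind_apply (hT hS) κ.measurable.aemeasurable]
    -- a.e. fiber conditions transferred to θ
    have haX : ∀ᵐ r : ℝ × ℝ ∂θ, ρX.condKernel r.1 {x | f x = r.1} = 1 := by
      have h : ∀ᵐ a ∂ρX.fst, ρX.condKernel a {x | f x = a} = 1 := by
        rw [hρXfst]; exact condKernel_fiber_ae μX hf
      have hmset : MeasurableSet {a : ℝ | ρX.condKernel a {x | f x = a} = 1} := by
        have : Measurable fun a : ℝ =>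
            ρX.condKernel a {x : X | (a, x) ∈ {p : ℝ × X | f p.2 = p.1}} :=
          Kernel.measurable_kernel_prodMk_left
            (measurableSet_eq_fun (hf.comp measurable_snd) measurable_fst)
        exact this (measurableSet_singleton 1)
      have h' : ∀ᵐ a ∂(θ.map Prod.fst), ρX.condKernel a {x | f x = a} = 1 := by
        rw [show θ.map Prod.fst = ρX.fst from hθ1.trans hρXfst.symm]
        exact h
      exact (ae_map_iff measurable_fst.aemeasurable hmset).mp h'
    have haY : ∀ᵐ r : ℝ × ℝ ∂θ, ρY.condKernel r.2 {y | g y = r.2} = 1 := by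
      have h : ∀ᵐ b ∂ρY.fst, ρY.condKernel b {y | g y = b} = 1 := by
        rw [hρYfst]; exact condKernel_fiber_ae μY hg
      have hmset : MeasurableSet {b : ℝ | ρY.condKernel b {y | g y = b} = 1} := by
        have : Measurable fun b : ℝ =>
            ρY.condKernel b {y : Y | (b, y) ∈ {p : ℝ × Y | g p.2 = p.1}} :=
          Kernel.measurable_kernel_prodMk_left
            (measurableSet_eq_fun (hg.comp measurable_snd) measurable_fst)
        exact this (measurableSet_singleton 1)
      have h' : ∀ᵐ b ∂(θ.map Prod.snd), ρY.condKernel b {y | g y = b} = 1 := by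
        rw [show θ.map Prod.snd = ρY.fst from hθ2.trans hρYfst.symm]
        exact h
      exact (ae_map_iff measurable_snd.aemeasurable hmset).mp h'
    have hcongr : ∫⁻ r, κ r ((fun q : X × Y => (f q.1, g q.2)) ⁻¹' S) ∂θ
        = ∫⁻ r, S.indicator (fun _ => (1 : ℝ≥0∞)) r ∂θ := by
      refine lintegral_congr_ae ?_
      filter_upwards [haX, haY] with r hrX hrY
      obtain ⟨a, b⟩ := r
      simp only at hrX hrY
      rw [hκapp (a, b)]
      have : IsProbabilityMeasure ((ρX.condKernel a).prod (ρY.condKernel b)) := by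
        infer_instance
      by_cases hr : (a, b) ∈ S
      · rw [Set.indicator_of_mem hr]
        refine le_antisymm prob_le_one ?_
        have hsub : {x : X | f x = a} ×ˢ {y : Y | g y = b}
            ⊆ (fun q : X × Y => (f q.1, g q.2)) ⁻¹' S := by
          rintro ⟨x, y⟩ ⟨hx, hy⟩
          simp only [Set.mem_preimage]
          simp only [Set.mem_setOf_eq] at hx hy
          rw [hx, hy]
          exact hr
        calc (1 : ℝ≥0∞) = ρX.condKernel a {x | f x = a} * ρY.condKernel b {y | g y = b} := by
              rw [hrX, hrY, one_mul]
          _ = ((ρX.condKernel a).prod (ρY.condKernel b)) ({x | f x = a} ×ˢ {y | g y = b}) :=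
              (Measure.prod_prod _ _).symm
          _ ≤ _ := measure_mono hsub
      · rw [Set.indicator_of_notMem hr]
        have hsub : (fun q : X × Y => (f q.1, g q.2)) ⁻¹' S
            ⊆ ({x : X | f x = a} ×ˢ {y : Y | g y = b})ᶜ := by
          rintro ⟨x, y⟩ hxy hmem
          obtain ⟨hx, hy⟩ := hmem
          simp only [Set.mem_setOf_eq] at hx hy
          simp only [Set.mem_preimage, hx, hy] at hxy
          exact hr hxy
        refine le_antisymm ?_ zero_le
        calc ((ρX.condKernel a).prod (ρY.condKernel b))
              ((fun q : X × Y => (f q.1, g q.2)) ⁻¹' S)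
            ≤ ((ρX.condKernel a).prod (ρY.condKernel b))
              (({x : X | f x = a} ×ˢ {y : Y | g y = b})ᶜ) := measure_mono hsub
          _ = 0 := by
              rw [prob_compl_eq_zero_iff
                (show MeasurableSet ({x : X | f x = a} ×ˢ {y : Y | g y = b}) from
                  (hf (measurableSet_singleton a)).prod (hg (measurableSet_singleton b))),
                Measure.prod_prod, hrX, hrY, one_mul]
    rw [hcongr, lintegral_indicator hS]
    simp

end Lift

/-- **Wasserstein distance of pushforwards as a coupling infimum**: for Polish spaces with
Borel probability measures and Borel measurable `f : X → ℝ`, `g : Y → ℝ`,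
`W_p(f_*μX, g_*μY) = inf over couplings μ of ‖f ∘ π_X − g ∘ π_Y‖_{L^p(μ)}`. -/
theorem Wp_map_eq_iInf_coupling
    {X Y : Type*} [TopologicalSpace X] [PolishSpace X] [MeasurableSpace X] [BorelSpace X]
    [TopologicalSpace Y] [PolishSpace Y] [MeasurableSpace Y] [BorelSpace Y]
    (μX : Measure X) (μY : Measure Y) [IsProbabilityMeasure μX] [IsProbabilityMeasure μY]
    (f : X → ℝ) (g : Y → ℝ) (hf : Measurable f) (hg : Measurable g)
    (p : ℝ≥0∞) (hp : 1 ≤ p) :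
    Wp p (μX.map f) (μY.map g)
      = ⨅ μ ∈ Coupling μX μY, eLpNorm (fun q : X × Y => f q.1 - g q.2) p μ := by
  have hT : Measurable (fun q : X × Y => (f q.1, g q.2)) :=
    (hf.comp measurable_fst).prodMk (hg.comp measurable_snd)
  have hsub : Measurable (fun r : ℝ × ℝ => r.1 - r.2) :=
    measurable_fst.sub measurable_snd
  -- key eLpNorm transfer
  have key : ∀ μ : Measure (X × Y),
      eLpNorm (fun r : ℝ × ℝ => r.1 - r.2) p (μ.map (fun q : X × Y => (f q.1, g q.2)))
        = eLpNorm (fun q : X × Y => f q.1 - g q.2) p μ := by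
    intro μ
    exact eLpNorm_map_measure hsub.stronglyMeasurable.aestronglyMeasurable hT.aemeasurable
  apply le_antisymm
  · refine le_iInf₂ fun μ hμ => ?_
    refine iInf₂_le_of_le (μ.map (fun q : X × Y => (f q.1, g q.2))) ⟨?_, ?_⟩ (key μ).le
    · rw [Measure.fst, Measure.map_map measurable_fst hT]
      have : (Prod.fst ∘ fun q : X × Y => (f q.1, g q.2)) = f ∘ Prod.fst := rfl
      rw [this, ← Measure.map_map hf measurable_fst, ← Measure.fst, hμ.1]
    · rw [Measure.snd, Measure.map_map measurable_snd hT]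
      have : (Prod.snd ∘ fun q : X × Y => (f q.1, g q.2)) = g ∘ Prod.snd := rfl
      rw [this, ← Measure.map_map hg measurable_snd, ← Measure.snd, hμ.2]
  · refine le_iInf₂ fun θ hθ => ?_
    obtain ⟨μ, hμ, hμmap⟩ := exists_coupling_lift μX μY hf hg hθ
    refine iInf₂_le_of_le μ hμ ?_
    rw [← key μ, hμmap]
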